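/- Let n ≥ 3, let A ⊆ M_n(S) be the subring of lower triangular matrices with diagonal entries in the image of k → S, let P_i (1 ≤ i ≤ n) be the column modules as below, and let s_i : P_n → P_i (1 ≤ i ≤ n−1) be the inclusions. Then the inclusion A ↪ M_n(S) is the universal {s_1, …, s_{n−1}}-inverting ring homomorphism: for every ring T and every ring homomorphism f : A → T such that for each 1 ≤ i ≤ n−1 the induced map id_T ⊗ s_i : T ⊗_A P_n → T ⊗_A P_i is an isomorphism (T regarded as a right A-module via f), there exists a unique ring homomorphism g : M_n(S) → T whose restriction to A equals f. -/

import Mathlib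

open scoped TensorProduct
open Function

universe u v w

section TT
/-! Tensor product `R ⊗_C P` where `R` is made into a right `C`-module via a
ring homomorphism `f : C →+* R`, and `P` is a left `C`-module. -/

variable {C : Type u} {R : Type v} [Ring C] [Ring R] (f : C →+* R)

def TT.rels (P : Type w) [AddCommGroup P] [Module C P] :
    Submodule ℤ (TensorProduct ℤ R P) :=
  Submodule.span ℤ {z | ∃ (r : R) (c : C) (p : P),
    z = (r * f c) ⊗ₜ[ℤ] p - r ⊗ₜ[ℤ] (c • p)}

/-- `R ⊗_C P`, with `R` a right `C`-module via `f : C →+* R`. -/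
def TT (P : Type w) [AddCommGroup P] [Module C P] : Type (max v w) :=
  TensorProduct ℤ R P ⧸ TT.rels f P

noncomputable instance (P : Type w) [AddCommGroup P] [Module C P] :
    AddCommGroup (TT f P) :=
  inferInstanceAs (AddCommGroup (TensorProduct ℤ R P ⧸ TT.rels f P))

/-- The class of `r ⊗ p` in `R ⊗_C P`. -/
noncomputable def TT.mk {P : Type w} [AddCommGroup P] [Module C P] (r : R) (p : P) :
    TT f P := Submodule.Quotient.mk (r ⊗ₜ[ℤ] p)

/-- The map `R ⊗_C P → R ⊗_C P'` induced by a map of left `C`-modules. -/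
noncomputable def TT.map {P P' : Type w} [AddCommGroup P] [Module C P]
    [AddCommGroup P'] [Module C P'] (g : P →ₗ[C] P') : TT f P →ₗ[ℤ] TT f P' :=
  Submodule.mapQ _ _ (LinearMap.lTensor R g.toAddMonoidHom.toIntLinearMap) (by
    rw [TT.rels, Submodule.span_le]
    rintro z ⟨r, c, p, rfl⟩
    simp only [SetLike.mem_coe, Submodule.mem_comap, map_sub, LinearMap.lTensor_tmul,
      AddMonoidHom.coe_toIntLinearMap, LinearMap.toAddMonoidHom_coe]
    exact Submodule.subset_span ⟨r, c, g p, by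
      erw [map_sub, LinearMap.lTensor_tmul, LinearMap.lTensor_tmul]
      simp [map_smul]⟩)

end TT

variable (k : Type u) (S : Type u) [CommRing k] [Ring S] [Algebra k S] (n : ℕ)

/-- The subring of `n × n` lower triangular matrices over `S` whose diagonal
entries lie in the image of `k → S`. -/
def lowTri : Subring (Matrix (Fin n) (Fin n) S) where
  carrier := {m | (∀ p q : Fin n, p < q → m p q = 0) ∧
    ∀ p : Fin n, m p p ∈ (algebraMap k S).range}
  zero_mem' := ⟨fun _ _ _ => rfl, fun _ => zero_mem _⟩
  one_mem' := ⟨fun p q h => Matrix.one_apply_ne (ne_of_lt h), fun _ => by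
    simpa [Matrix.one_apply] using one_mem (algebraMap k S).range⟩
  add_mem' := fun {a b} ha hb => ⟨fun p q h => by
      simp [Matrix.add_apply, ha.1 p q h, hb.1 p q h],
    fun p => add_mem (ha.2 p) (hb.2 p)⟩
  neg_mem' := fun {a} ha => ⟨fun p q h => by simp [Matrix.neg_apply, ha.1 p q h],
    fun p => neg_mem (ha.2 p)⟩
  mul_mem' := fun {a b} ha hb => by
    constructor
    · intro p q h
      rw [Matrix.mul_apply]
      apply Finset.sum_eq_zero
      intro l _
      rcases lt_or_ge p l with h' | h'
      · rw [ha.1 p l h', zero_mul]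
      · rw [hb.1 l q (lt_of_le_of_lt h' h), mul_zero]
    · intro p
      rw [Matrix.mul_apply]
      rw [Finset.sum_eq_single p]
      · exact mul_mem (ha.2 p) (hb.2 p)
      · intro l _ hl
        rcases lt_or_gt_of_ne hl with h' | h'
        · rw [hb.1 l p h', mul_zero]
        · rw [ha.1 p l h', zero_mul]
      · intro h; exact absurd (Finset.mem_univ p) h

/-- The space of column vectors `v ∈ Sⁿ` with `v j = 0` for `j < i` and
`v i` in the image of `k → S` (as a `k`-submodule of `Sⁿ`). -/
def Pcol (i : ℕ) : Submodule k (Fin n → S) where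
  carrier := {v | (∀ j : Fin n, (j : ℕ) < i → v j = 0) ∧
    ∀ j : Fin n, (j : ℕ) = i → v j ∈ (algebraMap k S).range}
  zero_mem' := ⟨fun _ _ => rfl, fun _ _ => zero_mem _⟩
  add_mem' := fun {a b} ha hb => ⟨fun j hj => by simp [Pi.add_apply, ha.1 j hj, hb.1 j hj],
    fun j hj => add_mem (ha.2 j hj) (hb.2 j hj)⟩
  smul_mem' := fun c v hv => ⟨fun j hj => by simp [Pi.smul_apply, hv.1 j hj],
    fun j hj => by
      obtain ⟨x, hx⟩ := hv.2 j hj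
      exact ⟨c * x, by rw [map_mul, Pi.smul_apply, ← hx, Algebra.smul_def]⟩⟩

lemma mulVec_mem_Pcol {i : ℕ} {a : Matrix (Fin n) (Fin n) S} (ha : a ∈ lowTri k S n)
    {v : Fin n → S} (hv : v ∈ Pcol k S n i) : a.mulVec v ∈ Pcol k S n i := by
  constructor
  · intro j hj
    rw [Matrix.mulVec, dotProduct]
    apply Finset.sum_eq_zero
    intro l _
    rcases lt_or_ge (l : ℕ) i with h' | h'
    · rw [hv.1 l h', mul_zero]
    · rw [ha.1 j l (by rw [Fin.lt_def]; omega), zero_mul]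
  · intro j hj
    have : a.mulVec v j = a j j * v j := by
      rw [Matrix.mulVec, dotProduct]
      rw [Finset.sum_eq_single j]
      · intro l _ hl
        rcases lt_or_gt_of_ne hl with h' | h'
        · rw [hv.1 l (by rw [Fin.lt_def] at h'; omega), mul_zero]
        · rw [ha.1 j l h', zero_mul]
      · intro h; exact absurd (Finset.mem_univ j) h
    rw [this]
    exact mul_mem (ha.2 j) (hv.2 j hj)

/-- Left action of the subring `lowTri k S n` on the column modules. -/
noncomputable instance Pcol.smulLowTri (i : ℕ) :
    SMul (lowTri k S n) (Pcol k S n i) :=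
  ⟨fun a v => ⟨a.1.mulVec v.1, mulVec_mem_Pcol k S n a.2 v.2⟩⟩

noncomputable instance Pcol.moduleLowTri (i : ℕ) :
    Module (lowTri k S n) (Pcol k S n i) where
  smul := (· • ·)
  one_smul v := Subtype.ext (Matrix.one_mulVec v.1)
  mul_smul a b v := Subtype.ext (Matrix.mulVec_mulVec v.1 a.1 b.1).symm
  smul_zero a := Subtype.ext (Matrix.mulVec_zero a.1)
  smul_add a v w := Subtype.ext (Matrix.mulVec_add a.1 v.1 w.1)
  add_smul a b v := Subtype.ext (Matrix.add_mulVec a.1 b.1 v.1)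
  zero_smul v := Subtype.ext (Matrix.zero_mulVec v.1)

@[simp] lemma Pcol.smul_def (i : ℕ) (a : lowTri k S n) (v : Pcol k S n i) :
    (a • v : Pcol k S n i).1 = a.1.mulVec v.1 := rfl

instance Pcol.smulCommClass (i : ℕ) :
    SMulCommClass k (lowTri k S n) (Pcol k S n i) where
  smul_comm c a v := Subtype.ext (Matrix.mulVec_smul a.1 c v.1).symm

/-- Left action of `lowTri k S n` on the module of all column vectors. -/
noncomputable instance colSMul : SMul (lowTri k S n) (Fin n → S) :=
  ⟨fun a v => a.1.mulVec v⟩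

noncomputable instance colModule : Module (lowTri k S n) (Fin n → S) where
  smul := (· • ·)
  one_smul v := Matrix.one_mulVec v
  mul_smul a b v := (Matrix.mulVec_mulVec v a.1 b.1).symm
  smul_zero a := Matrix.mulVec_zero a.1
  smul_add a v w := Matrix.mulVec_add a.1 v w
  add_smul a b v := Matrix.add_mulVec a.1 b.1 v
  zero_smul v := Matrix.zero_mulVec v

/-- Right action of `lowTri k S n` on the module of all row vectors. -/
noncomputable instance rowSMul : SMul (lowTri k S n)ᵐᵒᵖ (Fin n → S) :=
  ⟨fun a v => Matrix.vecMul v a.unop.1⟩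

noncomputable instance rowModule : Module (lowTri k S n)ᵐᵒᵖ (Fin n → S) where
  smul := (· • ·)
  one_smul v := Matrix.vecMul_one v
  mul_smul a b v := by
    show Matrix.vecMul v (b.unop.1 * a.unop.1) = Matrix.vecMul (Matrix.vecMul v b.unop.1) a.unop.1
    rw [Matrix.vecMul_vecMul]
  smul_zero a := Matrix.zero_vecMul a.unop.1
  smul_add a v w := Matrix.add_vecMul a.unop.1 v w
  add_smul a b v := Matrix.vecMul_add a.unop.1 b.unop.1 v
  zero_smul v := Matrix.vecMul_zero v

lemma Pcol_anti {i j : ℕ} (h : i ≤ j) : Pcol k S n j ≤ Pcol k S n i := by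
  rintro v ⟨h1, h2⟩
  constructor
  · intro l hl
    exact h1 l (lt_of_lt_of_le hl h)
  · intro l hl
    rcases eq_or_lt_of_le h with rfl | h'
    · exact h2 l hl
    · rw [h1 l (by omega)]
      exact zero_mem _

/-- A ring homomorphism `f : A → T` inverts the inclusions `s_i : P_{n-1} → P_i`
(`i < n-1`) if each induced map `id_T ⊗ s_i : T ⊗_A P_{n-1} → T ⊗_A P_i` is an
isomorphism, where `T` is a right `A`-module via `f`. -/
def InvertsSigma {T : Type u} [Ring T] (f : (lowTri k S n) →+* T) : Prop :=
  ∀ (i : ℕ) (_ : i < n - 1),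
    ∃ e : TT f (Pcol k S n (n - 1)) ≃+ TT f (Pcol k S n i),
      ∀ (t : T) (p : Pcol k S n (n - 1)),
        e (TT.mk f t p) = TT.mk f t (Submodule.inclusion (Pcol_anti k S n (by omega)) p)

namespace Stmt12

open Matrix

set_option maxHeartbeats 1000000
set_option synthInstance.maxHeartbeats 200000

/-! ### Generic lemmas about `TT` -/

section TTgeneric

variable {C : Type u} {R : Type v} [Ring C] [Ring R] (f : C →+* R)
variable {P P' : Type w} [AddCommGroup P] [Module C P] [AddCommGroup P'] [Module C P']

lemma TT.mk_rel (t : R) (c : C) (p : P) :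
    TT.mk f (t * f c) p = TT.mk f t (c • p) := by
  rw [TT.mk, TT.mk]
  exact (Submodule.Quotient.eq _).mpr (Submodule.subset_span ⟨t, c, p, rfl⟩)

lemma TT.mk_add_left (t t' : R) (p : P) :
    TT.mk f (t + t') p = TT.mk f t p + TT.mk f t' p := by
  rw [TT.mk, TT.mk, TT.mk]
  exact (congrArg Submodule.Quotient.mk (TensorProduct.add_tmul t t' p)).trans (Submodule.Quotient.mk_add _)

lemma TT.mk_add_right (t : R) (p p' : P) :
    TT.mk f t (p + p') = TT.mk f t p + TT.mk f t p' := by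
  rw [TT.mk, TT.mk, TT.mk]
  exact (congrArg Submodule.Quotient.mk (TensorProduct.tmul_add t p p')).trans (Submodule.Quotient.mk_add _)

lemma TT.ind {motive : TT f P → Prop} (h0 : motive 0)
    (hmk : ∀ t p, motive (TT.mk f t p))
    (hadd : ∀ x y, motive x → motive y → motive (x + y)) :
    ∀ x, motive x := by
  intro x
  obtain ⟨y, rfl⟩ := Submodule.Quotient.mk_surjective (TT.rels f P) x
  induction y using TensorProduct.induction_on with
  | zero => exact h0
  | tmul t p => exact hmk t p
  | add a b ha hb => rw [Submodule.Quotient.mk_add]; exact hadd _ _ ha hb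

/-- Construct an additive map out of `TT f P` from a biadditive balanced map. -/
noncomputable def TT.liftAdd {X : Type v} [AddCommGroup X] (B : R →+ P →+ X)
    (hB : ∀ (t : R) (c : C) (p : P), B (t * f c) p = B t (c • p)) :
    TT f P →+ X :=
  LinearMap.toAddMonoidHom <| Submodule.liftQ (TT.rels f P)
    ((TensorProduct.liftAddHom B (fun z m p => by
        simp only [map_zsmul, AddMonoidHom.smul_apply])).toIntLinearMap)
    (by
      rw [TT.rels, Submodule.span_le]
      rintro z ⟨r, c, p, rfl⟩
      simp only [SetLike.mem_coe, LinearMap.mem_ker, map_sub,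
        AddMonoidHom.coe_toIntLinearMap, TensorProduct.liftAddHom_tmul]
      rw [hB, sub_self])

@[simp] lemma TT.liftAdd_mk {X : Type v} [AddCommGroup X] (B : R →+ P →+ X)
    (hB : ∀ (t : R) (c : C) (p : P), B (t * f c) p = B t (c • p)) (t : R) (p : P) :
    TT.liftAdd f B hB (TT.mk f t p) = B t p := by
  rfl

@[simp] lemma TT.map_mk (g : P →ₗ[C] P') (t : R) (p : P) :
    TT.map f g (TT.mk f t p) = TT.mk f t (g p) := by
  rfl

end TTgeneric

/-! ### Matrix and column-vector machinery -/

section Matrices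

variable {k S : Type u} [CommRing k] [Ring S] [Algebra k S] {n : ℕ}

lemma AE_mem {p q : Fin n} {s : S}
    (h : q < p ∨ (p = q ∧ s ∈ (algebraMap k S).range)) :
    Matrix.single p q s ∈ lowTri k S n := by
  constructor
  · intro r c hrc
    apply Matrix.single_apply_of_ne
    rintro ⟨rfl, rfl⟩
    rcases h with h | ⟨h, -⟩
    · exact absurd hrc (not_lt_of_gt h)
    · exact absurd hrc (by simp [h, lt_irrefl])
  · intro r
    rcases h with h | ⟨rfl, hs⟩
    · rw [Matrix.single_apply_of_ne]
      · exact zero_mem _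
      · rintro ⟨rfl, rfl⟩; exact absurd h (lt_irrefl _)
    · by_cases hr : r = p
      · subst hr; simpa using hs
      · rw [Matrix.single_apply_of_ne]
        · exact zero_mem _
        · rintro ⟨rfl, -⟩; exact hr rfl

/-- The element `s Eₚ₀` of the subring `A`, for `q < p` or `p = q` with `s` in
the image of `k`. -/
def AE (s : S) (p q : Fin n)
    (h : q < p ∨ (p = q ∧ s ∈ (algebraMap k S).range)) : lowTri k S n :=
  ⟨Matrix.single p q s, AE_mem h⟩

lemma AE_mul_AE {s s' : S} {p q r : Fin n}
    (h : q < p ∨ (p = q ∧ s ∈ (algebraMap k S).range))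
    (h' : r < q ∨ (q = r ∧ s' ∈ (algebraMap k S).range))
    (h'' : r < p ∨ (p = r ∧ s * s' ∈ (algebraMap k S).range)) :
    AE s p q h * AE s' q r h' = AE (s * s') p r h'' :=
  Subtype.ext (single_mul_single_same s p q r s')

lemma AE_mul_AE_ne {s s' : S} {p q q' r : Fin n} (hne : q ≠ q')
    (h : q < p ∨ (p = q ∧ s ∈ (algebraMap k S).range))
    (h' : r < q' ∨ (q' = r ∧ s' ∈ (algebraMap k S).range)) :
    AE s p q h * AE s' q' r h' = 0 :=
  Subtype.ext (single_mul_single_of_ne s p q q' hne s')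

/-- The matrix with `v` as its `i`-th column and all other entries `0`. -/
def colMat (v : Fin n → S) (i : Fin n) : Matrix (Fin n) (Fin n) S :=
  Matrix.of fun r c => if c = i then v r else 0

lemma colMat_mem {i : Fin n} {v : Fin n → S} (hv : v ∈ Pcol k S n (i : ℕ)) :
    colMat v i ∈ lowTri k S n := by
  constructor
  · intro r c hrc
    show (if c = i then v r else 0) = 0
    split
    · next hc => subst hc; exact hv.1 r (by exact_mod_cast hrc)
    · rfl
  · intro r
    show (if r = i then v r else 0) ∈ _
    split
    · next hc => subst hc; exact hv.2 r rfl
    · exact zero_mem _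

lemma colMat_add (v w : Fin n → S) (i : Fin n) :
    colMat (v + w) i = colMat v i + colMat w i := by
  ext r c
  show (if c = i then v r + w r else 0) = (if c = i then v r else 0) + (if c = i then w r else 0)
  split <;> simp

lemma colMat_mulVec_single (v : Fin n → S) (i : Fin n) :
    (colMat v i).mulVec (Pi.single i 1) = v := by
  funext r
  rw [Matrix.mulVec_single]
  show (if i = i then v r else 0) * 1 = v r
  simp

lemma mul_colMat (a : Matrix (Fin n) (Fin n) S) (v : Fin n → S) (i : Fin n) :
    a * colMat v i = colMat (a.mulVec v) i := by
  ext r c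
  rw [Matrix.mul_apply]
  show _ = (if c = i then a.mulVec v r else 0)
  split
  · next h =>
    subst h
    rw [Matrix.mulVec, dotProduct]
    exact Finset.sum_congr rfl fun l _ => by
      show a r l * (if c = c then v l else 0) = _
      simp
  · next h =>
    apply Finset.sum_eq_zero
    intro l _
    show a r l * (if c = i then v l else 0) = 0
    simp [h]

lemma colMat_mul_std (v : Fin n → S) (i j : Fin n) :
    colMat v i * Matrix.single i j 1 = colMat v j := by
  ext r c
  rw [Matrix.mul_apply]
  show _ = (if c = j then v r else 0)
  rw [Finset.sum_eq_single i]
  · show (if (i:Fin n) = i then v r else 0) * Matrix.single i j 1 i c = _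
    rw [if_pos rfl]
    by_cases hc : c = j
    · subst hc; rw [Matrix.single_apply_same, mul_one, if_pos rfl]
    · rw [Matrix.single_apply_of_ne, mul_zero, if_neg hc]
      rintro ⟨-, rfl⟩; exact hc rfl
  · intro l _ hl
    show (if l = i then v r else 0) * _ = 0
    rw [if_neg hl, zero_mul]
  · intro h; exact absurd (Finset.mem_univ i) h

lemma colMat_single (p : Fin n) (s : S) (i : Fin n) :
    colMat (Pi.single p s) i = Matrix.single p i s := by
  ext r c
  show (if c = i then (Pi.single p s : Fin n → S) r else 0) = _
  rw [Pi.single_apply]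
  by_cases hc : c = i <;> by_cases hr : r = p
  · subst hc; subst hr; simp
  · subst hc
    rw [if_pos rfl, if_neg hr, Matrix.single_apply_of_ne]
    rintro ⟨rfl, -⟩; exact hr rfl
  · subst hr
    rw [if_neg hc, Matrix.single_apply_of_ne]
    rintro ⟨-, rfl⟩; exact hc rfl
  · rw [if_neg hc, Matrix.single_apply_of_ne]
    rintro ⟨rfl, rfl⟩; exact hr rfl

variable (k S n) in
/-- The distinguished generator of `Pcol k S n i`. -/
def uElt (i : Fin n) : Pcol k S n (i : ℕ) :=
  ⟨Pi.single i 1, by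
    constructor
    · intro j hj
      apply Pi.single_eq_of_ne
      intro hji; subst hji; exact absurd hj (lt_irrefl _)
    · intro j hj
      have : j = i := Fin.ext hj
      subst this
      simpa using ⟨1, map_one _⟩⟩

variable (k S n) in
/-- The element of `A` obtained by placing `p ∈ P_i` as the `i`-th column. -/
def cmElt (i : Fin n) (p : Pcol k S n (i : ℕ)) : lowTri k S n :=
  ⟨colMat p.1 i, colMat_mem p.2⟩

lemma cmElt_add (i : Fin n) (p p' : Pcol k S n (i : ℕ)) :
    cmElt k S n i (p + p') = cmElt k S n i p + cmElt k S n i p' :=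
  Subtype.ext (colMat_add p.1 p'.1 i)

lemma cmElt_smul (i : Fin n) (c : lowTri k S n) (p : Pcol k S n (i : ℕ)) :
    cmElt k S n i (c • p) = c * cmElt k S n i p :=
  Subtype.ext (mul_colMat c.1 p.1 i).symm

lemma cmElt_smul_uElt (i : Fin n) (p : Pcol k S n (i : ℕ)) :
    cmElt k S n i p • uElt k S n i = p :=
  Subtype.ext (colMat_mulVec_single p.1 i)

lemma AE_smul_uElt {s : S} {p q : Fin n}
    (h : q < p ∨ (p = q ∧ s ∈ (algebraMap k S).range))
    (hmem : Pi.single p s ∈ Pcol k S n (q : ℕ)) :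
    AE s p q h • uElt k S n q = ⟨Pi.single p s, hmem⟩ := by
  apply Subtype.ext
  show (Matrix.single p q s).mulVec (Pi.single q 1) = Pi.single p s
  rw [← colMat_single]
  exact colMat_mulVec_single _ _

lemma single_mem_Pcol {p : Fin n} {s : S} {i : ℕ}
    (h : i < (p : ℕ) ∨ (i = (p : ℕ) ∧ s ∈ (algebraMap k S).range)) :
    Pi.single p s ∈ Pcol k S n i := by
  constructor
  · intro j hj
    apply Pi.single_eq_of_ne
    intro hjp; subst hjp; omega
  · intro j hj
    by_cases hjp : j = p
    · subst hjp
      rcases h with h | ⟨h, hs⟩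
      · omega
      · simpa using hs
    · rw [Pi.single_eq_of_ne hjp]; exact zero_mem _

end Matrices

/-! ### The maps `psi`, `chi`, `Lm` and module maps between the `P_i` -/

section Maps

variable {k S : Type u} [CommRing k] [Ring S] [Algebra k S] {n : ℕ}

variable (k S n) in
/-- The inclusion `P_i ⊆ P_j` (`j ≤ i`) as an `A`-linear map. -/
def inclLin {i j : ℕ} (h : j ≤ i) :
    Pcol k S n i →ₗ[lowTri k S n] Pcol k S n j where
  toFun p := ⟨p.1, Pcol_anti k S n h p.2⟩
  map_add' _ _ := rfl
  map_smul' _ _ := rfl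

variable (k S n) in
/-- Right multiplication by `s : S` as an `A`-linear map `P_i → P_j`. -/
def rmulLin (s : S) {i j : ℕ} (h : j < i ∨ (j = i ∧ s ∈ (algebraMap k S).range)) :
    Pcol k S n i →ₗ[lowTri k S n] Pcol k S n j where
  toFun p := ⟨fun l => p.1 l * s, by
    have hji : j ≤ i := by rcases h with h | ⟨h, -⟩ <;> omega
    constructor
    · intro l hl; show p.1 l * s = 0; rw [p.2.1 l (by omega), zero_mul]
    · intro l hl
      show p.1 l * s ∈ _
      rcases h with h' | ⟨rfl, hs⟩
      · rw [p.2.1 l (by omega), zero_mul]; exact zero_mem _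
      · exact mul_mem (p.2.2 l hl) hs⟩
  map_add' p q := Subtype.ext (funext fun l => add_mul _ _ _)
  map_smul' a p := Subtype.ext (funext fun l => by
    show (a.1.mulVec p.1 l) * s = a.1.mulVec (fun m => p.1 m * s) l
    rw [Matrix.mulVec, Matrix.mulVec, dotProduct, dotProduct, Finset.sum_mul]
    exact Finset.sum_congr rfl fun m _ => mul_assoc _ _ _)

variable {T : Type u} [Ring T] (f : lowTri k S n →+* T)

/-- `psi i : T ⊗_A P_i → T`, `t ⊗ p ↦ t ⬝ f(colMat p)`. -/
noncomputable def psi (i : Fin n) : TT f (Pcol k S n (i : ℕ)) →+ T :=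
  TT.liftAdd f
    (AddMonoidHom.mk'
      (fun t => AddMonoidHom.mk' (fun p => t * f (cmElt k S n i p))
        (fun p p' => by
          show t * f (cmElt k S n i (p + p')) = t * _ + t * _
          rw [cmElt_add, _root_.map_add, mul_add]))
      (fun t t' => AddMonoidHom.ext fun p => by
        show (t + t') * _ = t * _ + t' * _
        rw [add_mul]))
    (fun t c p => by
      show (t * f c) * f (cmElt k S n i p) = t * f (cmElt k S n i (c • p))
      rw [cmElt_smul, _root_.map_mul, mul_assoc])

@[simp] lemma psi_mk (i : Fin n) (t : T) (p : Pcol k S n (i : ℕ)) :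
    psi f i (TT.mk f t p) = t * f (cmElt k S n i p) :=
  TT.liftAdd_mk f _ _ t p

/-- `chi i : T → T ⊗_A P_i`, `t ↦ t ⊗ uᵢ`. -/
noncomputable def chi (i : Fin n) (t : T) : TT f (Pcol k S n (i : ℕ)) :=
  TT.mk f t (uElt k S n i)

lemma chi_add (i : Fin n) (t t' : T) :
    chi f i (t + t') = chi f i t + chi f i t' :=
  TT.mk_add_left f t t' _

/-- `eps i = f(E_{ii})`. -/
noncomputable def eps (i : Fin n) : T :=
  f (AE 1 i i (Or.inr ⟨rfl, ⟨1, map_one _⟩⟩))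

lemma cmElt_uElt (i : Fin n) :
    cmElt k S n i (uElt k S n i) = AE 1 i i (Or.inr ⟨rfl, ⟨1, map_one _⟩⟩) :=
  Subtype.ext (colMat_single i 1 i)

lemma psi_chi (i : Fin n) (t : T) : psi f i (chi f i t) = t * eps f i := by
  rw [chi, psi_mk, cmElt_uElt, eps]

lemma psi_absorb (i : Fin n) : ∀ x, psi f i x * eps f i = psi f i x := by
  apply TT.ind f (motive := fun x => psi f i x * eps f i = psi f i x)
  · simp
  · intro t p
    rw [psi_mk, eps, mul_assoc, ← _root_.map_mul]
    congr 2
    exact Subtype.ext (colMat_mul_std p.1 i i)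
  · intro x y hx hy
    rw [_root_.map_add, add_mul, hx, hy]

lemma chi_psi (i : Fin n) : ∀ x, chi f i (psi f i x) = x := by
  apply TT.ind f (motive := fun x => chi f i (psi f i x) = x)
  · simp [chi, TT.mk]; rfl
  · intro t p
    rw [psi_mk, chi, TT.mk_rel, cmElt_smul_uElt]
  · intro x y hx hy
    rw [_root_.map_add, chi_add, hx, hy]

/-- Left multiplication by `t0` on `T ⊗_A P_i`. -/
noncomputable def Lm (t0 : T) (i : Fin n) :
    TT f (Pcol k S n (i : ℕ)) →+ TT f (Pcol k S n (i : ℕ)) :=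
  TT.liftAdd f
    (AddMonoidHom.mk'
      (fun t => AddMonoidHom.mk' (fun p => TT.mk f (t0 * t) p)
        (fun p p' => by
          show TT.mk f (t0 * t) (p + p') = _
          rw [TT.mk_add_right]))
      (fun t t' => AddMonoidHom.ext fun p => by
        show TT.mk f (t0 * (t + t')) p = _
        rw [mul_add, TT.mk_add_left]; rfl))
    (fun t c p => by
      show TT.mk f (t0 * (t * f c)) p = TT.mk f (t0 * t) (c • p)
      rw [← mul_assoc, TT.mk_rel])

@[simp] lemma Lm_mk (t0 t : T) (i : Fin n) (p : Pcol k S n (i : ℕ)) :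
    Lm f t0 i (TT.mk f t p) = TT.mk f (t0 * t) p :=
  TT.liftAdd_mk f _ _ t p

lemma psi_Lm (t0 : T) (i : Fin n) : ∀ x, psi f i (Lm f t0 i x) = t0 * psi f i x := by
  apply TT.ind f (motive := fun x => psi f i (Lm f t0 i x) = t0 * psi f i x)
  · simp
  · intro t p
    rw [Lm_mk, psi_mk, psi_mk, mul_assoc]
  · intro x y hx hy
    simp only [_root_.map_add, mul_add, hx, hy]

lemma Lm_chi (t0 t : T) (i : Fin n) : Lm f t0 i (chi f i t) = chi f i (t0 * t) :=
  Lm_mk f t0 t i _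

end Maps

/-! ### Part 1: the inclusion `A → Mₙ(S)` inverts the maps `sᵢ` -/

section Part1

variable {k S : Type u} [CommRing k] [Ring S] [Algebra k S] {n : ℕ}

lemma subtype_inverts (hn : 3 ≤ n) : InvertsSigma k S n ((lowTri k S n).subtype) := by
  intro i hi
  set ι := (lowTri k S n).subtype
  have hι : ∀ c : lowTri k S n, ι c = c.1 := fun c => rfl
  set fi : Fin n := ⟨i, by omega⟩
  set lastF : Fin n := ⟨n - 1, by omega⟩
  -- the forward map
  set F := TT.map ι (inclLin k S n (show i ≤ n - 1 by omega)) with hF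
  -- the inverse map
  set G := TT.liftAdd (P := Pcol k S n i) ι
    (AddMonoidHom.mk'
      (fun t => AddMonoidHom.mk'
        (fun p => TT.mk ι (t * colMat p.1 lastF) (uElt k S n lastF))
        (fun p p' => by
          show TT.mk ι (t * colMat (p.1 + p'.1) lastF) _ = _
          rw [colMat_add, mul_add, TT.mk_add_left]))
      (fun t t' => AddMonoidHom.ext fun p => by
        show TT.mk ι ((t + t') * colMat p.1 lastF) _ = _
        rw [add_mul, TT.mk_add_left]; rfl))
    (fun t c p => by
      show TT.mk ι (t * c.1 * colMat p.1 lastF) _ = TT.mk ι (t * colMat (c.1.mulVec p.1) lastF) _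
      rw [mul_assoc, mul_colMat]) with hG
  have hGmk : ∀ t p, G (TT.mk ι t p) =
      TT.mk ι (t * colMat p.1 lastF) (uElt k S n lastF) := fun t p => TT.liftAdd_mk ι _ _ t p
  have hFmk : ∀ t (p : Pcol k S n (n-1)), F (TT.mk ι t p) =
      TT.mk ι t (inclLin k S n (show i ≤ n - 1 by omega) p) := fun t p => TT.map_mk ι _ t p
  have hlt : fi < lastF := Fin.lt_def.mpr hi
  have left : ∀ x, G (F x) = x := by
    apply TT.ind ι (motive := fun x => G (F x) = x)
    · simp
    · intro t p
      rw [hFmk, hGmk]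
      calc TT.mk ι (t * colMat ((inclLin k S n (show i ≤ n - 1 by omega)) p).1 lastF)
              (uElt k S n lastF)
          = TT.mk ι (t * ι (cmElt k S n lastF p)) (uElt k S n lastF) := rfl
        _ = TT.mk ι t (cmElt k S n lastF p • uElt k S n lastF) := TT.mk_rel ι t _ _
        _ = TT.mk ι t p := by rw [cmElt_smul_uElt]
    · intro x y hx hy
      rw [_root_.map_add, _root_.map_add, hx, hy]
  have right : ∀ x, F (G x) = x := by
    apply TT.ind ι (motive := fun x => F (G x) = x)
    · simp
    · intro t p
      rw [hGmk, hFmk]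
      have hmem1 : Pi.single lastF (1:S) ∈ Pcol k S n i := single_mem_Pcol (Or.inl hi)
      have h1 : inclLin k S n (show i ≤ n - 1 by omega) (uElt k S n lastF) =
          (⟨Pi.single lastF 1, hmem1⟩ : Pcol k S n i) := Subtype.ext rfl
      have h1' : (AE (k:=k) (1:S) lastF fi (Or.inl hlt) • uElt k S n fi : Pcol k S n i) =
          (⟨Pi.single lastF 1, hmem1⟩ : Pcol k S n i) := by
        refine Subtype.ext ?_
        show (Matrix.single lastF fi 1).mulVec (Pi.single fi 1) = Pi.single lastF 1
        rw [← colMat_single, colMat_mulVec_single]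
      rw [h1, ← h1', ← TT.mk_rel]
      have h2 : (t * colMat p.1 lastF) * ι (AE (k:=k) 1 lastF fi (Or.inl hlt)) =
          t * ι (cmElt k S n fi p) := by
        rw [mul_assoc]
        congr 1
        exact colMat_mul_std p.1 lastF fi
      rw [h2, TT.mk_rel, cmElt_smul_uElt]
    · intro x y hx hy
      rw [_root_.map_add, _root_.map_add, hx, hy]
  refine ⟨{ toFun := F, invFun := G, left_inv := left, right_inv := right,
            map_add' := _root_.map_add F }, ?_⟩
  intro t p
  show F (TT.mk ι t p) = _
  rw [hFmk]
  congr 1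

end Part1

/-! ### Part 2: universality -/

section Part2

variable {k S : Type u} [CommRing k] [Ring S] [Algebra k S] {n : ℕ}
variable {T : Type u} [Ring T] {f : lowTri k S n →+* T}

/-- The chosen isomorphism `T ⊗_A P_{n-1} ≃ T ⊗_A P_i`. -/
noncomputable def Ee (hf : InvertsSigma k S n f) (i : ℕ) (hi : i < n - 1) :
    TT f (Pcol k S n (n - 1)) ≃+ TT f (Pcol k S n i) :=
  (hf i hi).choose

lemma Ee_mk (hf : InvertsSigma k S n f) (i : ℕ) (hi : i < n - 1) (t : T)
    (p : Pcol k S n (n - 1)) :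
    Ee hf i hi (TT.mk f t p) =
      TT.mk f t (inclLin k S n (show i ≤ n - 1 by omega) p) :=
  ((hf i hi).choose_spec t p).trans (congrArg (TT.mk f t) (Subtype.ext rfl))

/-- `pi' i = the element g(E_{i,n-1})`, obtained from the inverse isomorphism. -/
noncomputable def pi' (hf : InvertsSigma k S n f) (i : Fin n) (hi : (i : ℕ) < n - 1) : T :=
  psi f ⟨n - 1, by omega⟩ ((Ee hf (i : ℕ) hi).symm (chi f i 1))

lemma pi'_def (hf : InvertsSigma k S n f) (i : Fin n) (hi : (i : ℕ) < n - 1) :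
    pi' hf i hi = psi f ⟨n - 1, by omega⟩ ((Ee hf (i : ℕ) hi).symm (chi f i 1)) := rfl

/-- `sg i = f(E_{n-1,i})`. -/
noncomputable def sg (f : lowTri k S n →+* T) (i : Fin n) (hi : (i : ℕ) < n - 1) : T :=
  f (AE 1 ⟨n - 1, by omega⟩ i (Or.inl (Fin.lt_def.mpr hi)))

lemma Lm_Ee (hf : InvertsSigma k S n f) (t0 : T) (i : Fin n) (hi : (i : ℕ) < n - 1) :
    ∀ x, Ee hf (i : ℕ) hi (Lm f t0 ⟨n - 1, by omega⟩ x) = Lm f t0 i (Ee hf (i : ℕ) hi x) := by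
  apply TT.ind f (motive := fun x =>
    Ee hf (i : ℕ) hi (Lm f t0 ⟨n - 1, by omega⟩ x) = Lm f t0 i (Ee hf (i : ℕ) hi x))
  · simp
  · intro t p
    rw [Lm_mk, Ee_mk, Ee_mk, Lm_mk]
  · intro x y hx hy
    simp only [_root_.map_add, hx, hy]

lemma Ee_symm_Lm (hf : InvertsSigma k S n f) (t0 : T) (i : Fin n) (hi : (i : ℕ) < n - 1)
    (y : TT f (Pcol k S n (i : ℕ))) :
    (Ee hf (i : ℕ) hi).symm (Lm f t0 i y) =
      Lm f t0 ⟨n - 1, by omega⟩ ((Ee hf (i : ℕ) hi).symm y) := by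
  apply (Ee hf (i : ℕ) hi).injective
  rw [AddEquiv.apply_symm_apply, Lm_Ee hf t0 i hi, AddEquiv.apply_symm_apply]

lemma mul_pi (hf : InvertsSigma k S n f) (t0 : T) (i : Fin n) (hi : (i : ℕ) < n - 1) :
    t0 * pi' hf i hi = psi f ⟨n - 1, by omega⟩ ((Ee hf (i : ℕ) hi).symm (chi f i t0)) := by
  rw [pi'_def, ← psi_Lm, ← Ee_symm_Lm, Lm_chi, mul_one]

lemma chi_mul_pi (hf : InvertsSigma k S n f) (t0 : T) (i : Fin n) (hi : (i : ℕ) < n - 1) :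
    chi f ⟨n - 1, by omega⟩ (t0 * pi' hf i hi) = (Ee hf (i : ℕ) hi).symm (chi f i t0) := by
  rw [mul_pi hf t0 i hi, chi_psi]

lemma psi_Ee (hf : InvertsSigma k S n f) (i : Fin n) (hi : (i : ℕ) < n - 1) :
    ∀ x, psi f i (Ee hf (i : ℕ) hi x) = psi f ⟨n - 1, by omega⟩ x * sg f i hi := by
  apply TT.ind f (motive := fun x =>
    psi f i (Ee hf (i : ℕ) hi x) = psi f ⟨n - 1, by omega⟩ x * sg f i hi)
  · simp
  · intro t p
    rw [Ee_mk, psi_mk, psi_mk, sg, mul_assoc, ← _root_.map_mul]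
    congr 2
    exact Subtype.ext (colMat_mul_std p.1 ⟨n - 1, by omega⟩ i).symm
  · intro x y hx hy
    simp only [_root_.map_add, add_mul, hx, hy]

lemma pi_mul_eps (hf : InvertsSigma k S n f) (i : Fin n) (hi : (i : ℕ) < n - 1) :
    pi' hf i hi * eps f ⟨n - 1, by omega⟩ = pi' hf i hi :=
  psi_absorb f _ _

lemma pi_mul_sg (hf : InvertsSigma k S n f) (i : Fin n) (hi : (i : ℕ) < n - 1) :
    pi' hf i hi * sg f i hi = eps f i := by
  have h := psi_Ee hf i hi ((Ee hf (i : ℕ) hi).symm (chi f i 1))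
  rw [AddEquiv.apply_symm_apply, psi_chi, one_mul] at h
  rw [pi'_def]
  exact h.symm

lemma chi_sg (hf : InvertsSigma k S n f) (i : Fin n) (hi : (i : ℕ) < n - 1) :
    chi f i (sg f i hi) = Ee hf (i : ℕ) hi (chi f ⟨n - 1, by omega⟩ 1) := by
  rw [chi, chi, Ee_mk, sg, ← one_mul
    (f (AE 1 ⟨n - 1, by omega⟩ i (Or.inl (Fin.lt_def.mpr hi)))), TT.mk_rel]
  congr 1
  refine Subtype.ext ?_
  show (Matrix.single (⟨n - 1, by omega⟩ : Fin n) i 1).mulVec (Pi.single i 1) =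
    Pi.single (⟨n - 1, by omega⟩ : Fin n) (1 : S)
  rw [← colMat_single, colMat_mulVec_single]

lemma sg_mul_pi (hf : InvertsSigma k S n f) (i : Fin n) (hi : (i : ℕ) < n - 1) :
    sg f i hi * pi' hf i hi = eps f ⟨n - 1, by omega⟩ := by
  have h2 := chi_mul_pi hf (sg f i hi) i hi
  rw [chi_sg hf i hi, AddEquiv.symm_apply_apply] at h2
  have h3 := congrArg (psi f ⟨n - 1, by omega⟩) h2
  rw [psi_chi, psi_chi, one_mul] at h3
  rw [← pi_mul_eps hf i hi, ← mul_assoc, h3]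

lemma chi_eps (i : Fin n) : chi f i (eps f i) = chi f i 1 := by
  rw [chi, chi, eps, ← one_mul (f (AE 1 i i (Or.inr ⟨rfl, ⟨1, map_one _⟩⟩))), TT.mk_rel]
  congr 1
  refine Subtype.ext ?_
  show (Matrix.single i i 1).mulVec (Pi.single i 1) = Pi.single i (1 : S)
  rw [← colMat_single, colMat_mulVec_single]

lemma eps_mul_pi (hf : InvertsSigma k S n f) (i : Fin n) (hi : (i : ℕ) < n - 1) :
    eps f i * pi' hf i hi = pi' hf i hi := by
  rw [mul_pi hf _ i hi, chi_eps]
  exact (pi'_def hf i hi).symm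

lemma sg_inj (hf : InvertsSigma k S n f) (i : Fin n) (hi : (i : ℕ) < n - 1) {u v : T}
    (hu : u * eps f ⟨n - 1, by omega⟩ = u) (hv : v * eps f ⟨n - 1, by omega⟩ = v)
    (huv : u * sg f i hi = v * sg f i hi) : u = v := by
  have e1 : ∀ w : T, w * eps f ⟨n - 1, by omega⟩ = w →
      w * sg f i hi = psi f i (Ee hf (i : ℕ) hi (chi f ⟨n - 1, by omega⟩ w)) := by
    intro w hw
    rw [psi_Ee, psi_chi, hw]
  rw [e1 u hu, e1 v hv] at huv
  have h2 : Ee hf (i : ℕ) hi (chi f ⟨n - 1, by omega⟩ u) =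
      Ee hf (i : ℕ) hi (chi f ⟨n - 1, by omega⟩ v) := by
    have h := congrArg (chi f i) huv
    rw [chi_psi, chi_psi] at h
    exact h
  have h3 := (Ee hf (i : ℕ) hi).injective h2
  have h4 := congrArg (psi f ⟨n - 1, by omega⟩) h3
  rw [psi_chi, psi_chi] at h4
  rw [← hu, ← hv, h4]

lemma map_incl_Ee (hf : InvertsSigma k S n f) (i j : ℕ) (hi : i < n - 1) (hj : j < n - 1)
    (hji : j ≤ i) : ∀ x, TT.map f (inclLin k S n hji) (Ee hf i hi x) = Ee hf j hj x := by
  apply TT.ind f (motive := fun x =>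
    TT.map f (inclLin k S n hji) (Ee hf i hi x) = Ee hf j hj x)
  · simp
  · intro t p
    rw [Ee_mk, TT.map_mk, Ee_mk]
    exact congrArg (TT.mk f t) (Subtype.ext rfl)
  · intro x y hx hy
    simp only [_root_.map_add, hx, hy]

lemma Ee_symm_map_incl (hf : InvertsSigma k S n f) (i j : ℕ) (hi : i < n - 1)
    (hj : j < n - 1) (hji : j ≤ i) (x : TT f (Pcol k S n i)) :
    (Ee hf j hj).symm (TT.map f (inclLin k S n hji) x) = (Ee hf i hi).symm x := by
  conv_lhs => rw [← (Ee hf i hi).apply_symm_apply x]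
  rw [map_incl_Ee hf i j hi hj hji, AddEquiv.symm_apply_apply]

lemma indep (hf : InvertsSigma k S n f) (s : S) (i j : ℕ) (hi : i < n - 1)
    (hj : j < n - 1) (hji : j ≤ i) (y : TT f (Pcol k S n (n - 1))) :
    (Ee hf j hj).symm (TT.map f (rmulLin k S n s (i := n - 1) (j := j) (Or.inl hj)) y) =
    (Ee hf i hi).symm (TT.map f (rmulLin k S n s (i := n - 1) (j := i) (Or.inl hi)) y) := by
  have h1 : TT.map f (rmulLin k S n s (i := n - 1) (j := j) (Or.inl hj)) y
      = TT.map f (inclLin k S n hji)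
          (TT.map f (rmulLin k S n s (i := n - 1) (j := i) (Or.inl hi)) y) := by
    refine TT.ind f (motive := fun y =>
      TT.map f (rmulLin k S n s (i := n - 1) (j := j) (Or.inl hj)) y
      = TT.map f (inclLin k S n hji)
          (TT.map f (rmulLin k S n s (i := n - 1) (j := i) (Or.inl hi)) y)) ?_ ?_ ?_ y
    · simp
    · intro t p
      rw [TT.map_mk, TT.map_mk, TT.map_mk]
      exact congrArg (TT.mk f t) (Subtype.ext rfl)
    · intro x y hx hy
      simp only [_root_.map_add, hx, hy]
  rw [h1, Ee_symm_map_incl hf i j hi hj hji]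

/-- `dl s = g(s E_{n-1,n-1})`. -/
noncomputable def dl (hf : InvertsSigma k S n f) (hn : 3 ≤ n) (s : S) : T :=
  f (AE s ⟨n - 1, by omega⟩ ⟨0, by omega⟩ (Or.inl (Fin.mk_lt_mk.mpr (by omega)))) *
    pi' hf ⟨0, by omega⟩ (show (0 : ℕ) < n - 1 by omega)

lemma chi_AE (q : Fin n) (hq : (q : ℕ) < n - 1) (t0 : T) (s : S) :
    chi f q (t0 * f (AE s ⟨n - 1, by omega⟩ q (Or.inl (Fin.lt_def.mpr hq)))) =
      TT.map f (rmulLin k S n s (i := n - 1) (j := (q : ℕ)) (Or.inl hq))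
        (chi f ⟨n - 1, by omega⟩ t0) := by
  rw [chi, chi, TT.mk_rel, TT.map_mk]
  congr 1
  refine Subtype.ext ?_
  show (Matrix.single (⟨n - 1, by omega⟩ : Fin n) q s).mulVec (Pi.single q 1) =
    fun l => (Pi.single (⟨n - 1, by omega⟩ : Fin n) (1 : S) : Fin n → S) l * s
  rw [← colMat_single, colMat_mulVec_single]
  funext l
  rw [Pi.single_apply, Pi.single_apply]
  split <;> simp

lemma chi_AE1 (q : Fin n) (hq : (q : ℕ) < n - 1) (s : S) :
    chi f q (f (AE s ⟨n - 1, by omega⟩ q (Or.inl (Fin.lt_def.mpr hq)))) =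
      TT.map f (rmulLin k S n s (i := n - 1) (j := (q : ℕ)) (Or.inl hq))
        (chi f ⟨n - 1, by omega⟩ 1) := by
  have h := chi_AE (f := f) q hq 1 s
  rwa [one_mul] at h

lemma dl_eq (hf : InvertsSigma k S n f) (hn : 3 ≤ n) (s : S) (q : Fin n)
    (hq : (q : ℕ) < n - 1) :
    dl hf hn s = f (AE s ⟨n - 1, by omega⟩ q (Or.inl (Fin.lt_def.mpr hq))) * pi' hf q hq := by
  rw [dl, mul_pi hf _ ⟨0, by omega⟩ (show (0 : ℕ) < n - 1 by omega),
    mul_pi hf _ q hq, chi_AE1 ⟨0, by omega⟩ (show (0 : ℕ) < n - 1 by omega) s,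
    chi_AE1 q hq s]
  congr 1
  exact indep hf s (q : ℕ) 0 hq (by omega) (by omega) (chi f ⟨n - 1, by omega⟩ 1)

lemma dl_shift (hf : InvertsSigma k S n f) (hn : 3 ≤ n) (s' : S)
    (z : TT f (Pcol k S n 1)) :
    (Ee hf 1 (by omega)).symm
      (TT.map f (rmulLin k S n s' (i := n - 1) (j := 1) (Or.inl (by omega)))
        ((Ee hf 1 (by omega)).symm z))
    = (Ee hf 0 (by omega)).symm
        (TT.map f (rmulLin k S n s' (i := 1) (j := 0) (Or.inl (by omega))) z) := by
  obtain ⟨y, rfl⟩ : ∃ y, Ee hf 1 (by omega) y = z :=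
    ⟨(Ee hf 1 (by omega)).symm z, (Ee hf 1 (by omega)).apply_symm_apply z⟩
  rw [AddEquiv.symm_apply_apply]
  have hcomp : TT.map f (rmulLin k S n s' (i := 1) (j := 0) (Or.inl (by omega)))
      (Ee hf 1 (by omega) y)
      = TT.map f (rmulLin k S n s' (i := n - 1) (j := 0) (Or.inl (by omega))) y := by
    refine TT.ind f (motive := fun y =>
      TT.map f (rmulLin k S n s' (i := 1) (j := 0) (Or.inl (by omega)))
        (Ee hf 1 (by omega) y)
      = TT.map f (rmulLin k S n s' (i := n - 1) (j := 0) (Or.inl (by omega))) y) ?_ ?_ ?_ y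
    · simp
    · intro t p
      rw [Ee_mk, TT.map_mk, TT.map_mk]
      exact congrArg (TT.mk f t) (Subtype.ext rfl)
    · intro a b ha hb
      simp only [_root_.map_add, ha, hb]
  rw [hcomp]
  exact (indep hf s' 1 0 (by omega) (by omega) (by omega) y).symm

lemma dl_mul (hf : InvertsSigma k S n f) (hn : 3 ≤ n) (s s' : S) :
    dl hf hn s * dl hf hn s' = dl hf hn (s * s') := by
  have h1 : (1 : ℕ) < n - 1 := by omega
  have h0 : (0 : ℕ) < n - 1 := by omega
  rw [dl_eq hf hn s' ⟨1, by omega⟩ h1, ← mul_assoc,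
    mul_pi hf (dl hf hn s * f (AE s' ⟨n - 1, by omega⟩ ⟨1, by omega⟩
      (Or.inl (Fin.lt_def.mpr h1)))) ⟨1, by omega⟩ h1,
    chi_AE ⟨1, by omega⟩ h1 (dl hf hn s) s']
  have hA : chi f ⟨n - 1, by omega⟩ (dl hf hn s) =
      (Ee hf 0 h0).symm (TT.map f (rmulLin k S n s (i := n - 1) (j := 0) (Or.inl h0))
        (chi f ⟨n - 1, by omega⟩ 1)) := by
    rw [dl, chi_mul_pi hf _ ⟨0, by omega⟩ h0, chi_AE1 ⟨0, by omega⟩ h0 s]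
  rw [hA]
  rw [indep hf s 1 0 h1 h0 (by omega) (chi f ⟨n - 1, by omega⟩ 1)]
  rw [dl_shift hf hn s']
  have hcomp2 : TT.map f (rmulLin k S n s' (i := 1) (j := 0) (Or.inl (by omega)))
      (TT.map f (rmulLin k S n s (i := n - 1) (j := 1) (Or.inl h1))
        (chi f ⟨n - 1, by omega⟩ 1))
      = TT.map f (rmulLin k S n (s * s') (i := n - 1) (j := 0) (Or.inl h0))
          (chi f ⟨n - 1, by omega⟩ 1) := by
    refine TT.ind f (motive := fun y =>
      TT.map f (rmulLin k S n s' (i := 1) (j := 0) (Or.inl (by omega)))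
        (TT.map f (rmulLin k S n s (i := n - 1) (j := 1) (Or.inl h1)) y)
      = TT.map f (rmulLin k S n (s * s') (i := n - 1) (j := 0) (Or.inl h0)) y) ?_ ?_ ?_ _
    · simp
    · intro t p
      rw [TT.map_mk, TT.map_mk, TT.map_mk]
      exact congrArg (TT.mk f t) (Subtype.ext (funext fun l => mul_assoc _ _ _))
    · intro a b ha hb
      simp only [_root_.map_add, ha, hb]
  rw [hcomp2, ← chi_AE1 ⟨0, by omega⟩ h0 (s * s'), ← mul_pi hf _ ⟨0, by omega⟩ h0]
  rfl

lemma AE_mul_eps (s : S) (p q : Fin n)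
    (h : q < p ∨ (p = q ∧ s ∈ (algebraMap k S).range)) :
    f (AE s p q h) * eps f q = f (AE s p q h) := by
  rw [eps, ← _root_.map_mul]
  congr 1
  refine Subtype.ext ?_
  show Matrix.single p q s * Matrix.single q q 1 = Matrix.single p q s
  rw [Matrix.single_mul_single_same, mul_one]

lemma eps_mul_AE (s : S) (p q : Fin n)
    (h : q < p ∨ (p = q ∧ s ∈ (algebraMap k S).range)) :
    eps f p * f (AE s p q h) = f (AE s p q h) := by
  rw [eps, ← _root_.map_mul]
  congr 1
  refine Subtype.ext ?_
  show Matrix.single p p 1 * Matrix.single p q s = Matrix.single p q s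
  rw [Matrix.single_mul_single_same, one_mul]

lemma pi_mul_AE (hf : InvertsSigma k S n f) (p q : Fin n) (hp : (p : ℕ) < n - 1)
    (hq : (q : ℕ) < n - 1) (s : S)
    (h : q < p ∨ (p = q ∧ s ∈ (algebraMap k S).range)) :
    pi' hf p hp * f (AE s ⟨n - 1, by omega⟩ q (Or.inl (Fin.lt_def.mpr hq))) =
      f (AE s p q h) := by
  have h' : (q : ℕ) < (p : ℕ) ∨ ((q : ℕ) = (p : ℕ) ∧ s ∈ (algebraMap k S).range) := by
    rcases h with h | ⟨h, hs⟩
    · exact Or.inl (Fin.lt_def.mp h)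
    · exact Or.inr ⟨by rw [h], hs⟩
  have hdef : Ee hf (p : ℕ) hp (chi f ⟨n - 1, by omega⟩ (pi' hf p hp)) = chi f p 1 := by
    have h1 := chi_mul_pi hf 1 p hp
    rw [one_mul] at h1
    rw [h1, AddEquiv.apply_symm_apply]
  have h2 := congrArg (TT.map f (rmulLin k S n s (i := (p : ℕ)) (j := (q : ℕ)) h')) hdef
  have hL : TT.map f (rmulLin k S n s (i := (p : ℕ)) (j := (q : ℕ)) h')
      (Ee hf (p : ℕ) hp (chi f ⟨n - 1, by omega⟩ (pi' hf p hp)))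
      = chi f q (pi' hf p hp *
          f (AE s ⟨n - 1, by omega⟩ q (Or.inl (Fin.lt_def.mpr hq)))) := by
    rw [chi, Ee_mk, TT.map_mk, chi, TT.mk_rel]
    congr 1
    refine Subtype.ext ?_
    show (fun l => (Pi.single (⟨n - 1, by omega⟩ : Fin n) (1 : S) : Fin n → S) l * s)
      = (Matrix.single (⟨n - 1, by omega⟩ : Fin n) q s).mulVec (Pi.single q 1)
    rw [← colMat_single, colMat_mulVec_single]
    funext l
    rw [Pi.single_apply, Pi.single_apply]
    split <;> simp
  have hR : TT.map f (rmulLin k S n s (i := (p : ℕ)) (j := (q : ℕ)) h') (chi f p 1)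
      = chi f q (f (AE s p q h)) := by
    rw [chi, TT.map_mk, chi, ← one_mul (f (AE s p q h)), TT.mk_rel]
    congr 1
    refine Subtype.ext ?_
    show (fun l => (Pi.single p (1 : S) : Fin n → S) l * s)
      = (Matrix.single p q s).mulVec (Pi.single q 1)
    rw [← colMat_single, colMat_mulVec_single]
    funext l
    rw [Pi.single_apply, Pi.single_apply]
    split <;> simp
  rw [hL, hR] at h2
  have h3 := congrArg (psi f q) h2
  rw [psi_chi, psi_chi] at h3
  rwa [mul_assoc, AE_mul_eps, AE_mul_eps] at h3

lemma dl_add (hf : InvertsSigma k S n f) (hn : 3 ≤ n) (s s' : S) :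
    dl hf hn (s + s') = dl hf hn s + dl hf hn s' := by
  rw [dl, dl, dl, ← add_mul, ← _root_.map_add]
  congr 2
  exact Subtype.ext (Matrix.single_add _ _ s s')

lemma dl_zero (hf : InvertsSigma k S n f) (hn : 3 ≤ n) : dl hf hn 0 = 0 := by
  rw [dl]
  have : (AE (0 : S) ⟨n - 1, by omega⟩ ⟨0, by omega⟩
      (Or.inl (Fin.mk_lt_mk.mpr (by omega)))) = (0 : lowTri k S n) :=
    Subtype.ext (Matrix.single_zero _ _)
  rw [this, map_zero, zero_mul]

lemma dl_one (hf : InvertsSigma k S n f) (hn : 3 ≤ n) :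
    dl hf hn 1 = eps f ⟨n - 1, by omega⟩ := by
  rw [dl]
  exact sg_mul_pi hf ⟨0, by omega⟩ (show (0 : ℕ) < n - 1 by omega)

lemma dl_mul_eps (hf : InvertsSigma k S n f) (hn : 3 ≤ n) (s : S) :
    dl hf hn s * eps f ⟨n - 1, by omega⟩ = dl hf hn s := by
  rw [dl, mul_assoc, pi_mul_eps]

lemma eps_mul_dl (hf : InvertsSigma k S n f) (hn : 3 ≤ n) (s : S) :
    eps f ⟨n - 1, by omega⟩ * dl hf hn s = dl hf hn s := by
  rw [dl, ← mul_assoc, eps_mul_AE]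

lemma dl_range (hf : InvertsSigma k S n f) (hn : 3 ≤ n) (s : S)
    (hs : s ∈ (algebraMap k S).range) :
    dl hf hn s = f (AE s ⟨n - 1, by omega⟩ ⟨n - 1, by omega⟩ (Or.inr ⟨rfl, hs⟩)) := by
  rw [dl]
  have : (AE s ⟨n - 1, by omega⟩ ⟨0, by omega⟩ (Or.inl (Fin.mk_lt_mk.mpr (by omega))) :
      lowTri k S n)
      = AE s ⟨n - 1, by omega⟩ ⟨n - 1, by omega⟩ (Or.inr ⟨rfl, hs⟩) *
        AE 1 ⟨n - 1, by omega⟩ ⟨0, by omega⟩ (Or.inl (Fin.mk_lt_mk.mpr (by omega))) := by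
    refine Subtype.ext ?_
    show Matrix.single _ _ s = Matrix.single _ _ s * Matrix.single _ _ 1
    rw [Matrix.single_mul_single_same, mul_one]
  rw [this, _root_.map_mul, mul_assoc]
  have hsg : (f (AE 1 ⟨n - 1, by omega⟩ ⟨0, by omega⟩
        (Or.inl (Fin.mk_lt_mk.mpr (by omega)))) *
      pi' hf ⟨0, by omega⟩ (show (0 : ℕ) < n - 1 by omega)) = eps f ⟨n - 1, by omega⟩ :=
    sg_mul_pi hf ⟨0, by omega⟩ (show (0 : ℕ) < n - 1 by omega)
  rw [hsg, AE_mul_eps]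

/-- `lam p = g(E_{p,n-1})`. -/
noncomputable def lam (hf : InvertsSigma k S n f) (hn : 3 ≤ n) (p : Fin n) : T :=
  if h : (p : ℕ) < n - 1 then pi' hf p h
  else eps f ⟨n - 1, Nat.sub_lt (Nat.lt_of_lt_of_le (Nat.zero_lt_succ 2) hn) Nat.one_pos⟩

/-- `rho q = f(E_{n-1,q})`. -/
noncomputable def rho (f : lowTri k S n →+* T) (hn : 3 ≤ n) (q : Fin n) : T :=
  if h : (q : ℕ) < n - 1 then sg f q h
  else eps f ⟨n - 1, Nat.sub_lt (Nat.lt_of_lt_of_le (Nat.zero_lt_succ 2) hn) Nat.one_pos⟩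

lemma fin_eq_last (hn : 3 ≤ n) (p : Fin n) (h : ¬ (p : ℕ) < n - 1) :
    p = ⟨n - 1, by omega⟩ := by
  have hp2 := p.2
  apply Fin.ext
  show (p : ℕ) = n - 1
  omega

lemma eps_mul_eps (q : Fin n) : eps f q * eps f q = eps f q :=
  AE_mul_eps 1 q q _

lemma sg_mul_eps_ne (i : Fin n) (hi : (i : ℕ) < n - 1) (r : Fin n) (hir : i ≠ r) :
    sg f i hi * eps f r = 0 := by
  rw [sg, eps, ← _root_.map_mul, AE_mul_AE_ne hir, map_zero]

lemma rho_mul_lam (hf : InvertsSigma k S n f) (hn : 3 ≤ n) (q r : Fin n) :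
    rho f hn q * lam hf hn r = if q = r then eps f ⟨n - 1, by omega⟩ else 0 := by
  by_cases hq : (q : ℕ) < n - 1 <;> by_cases hr : (r : ℕ) < n - 1
  · rw [rho, dif_pos hq, lam, dif_pos hr]
    by_cases hqr : q = r
    · subst hqr
      rw [if_pos rfl]
      exact sg_mul_pi hf q hq
    · rw [if_neg hqr, ← eps_mul_pi hf r hr, ← mul_assoc, sg_mul_eps_ne q hq r hqr, zero_mul]
  · have hr2 := r.2
    have hqr : q ≠ r := fun hEq => by
      have := congrArg Fin.val hEq; omega
    have hql : q ≠ (⟨n - 1, by omega⟩ : Fin n) := fun hEq =>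
      (show (q : ℕ) ≠ n - 1 by omega) (congrArg Fin.val hEq)
    rw [rho, dif_pos hq, lam, dif_neg hr, if_neg hqr]
    exact sg_mul_eps_ne q hq _ hql
  · have hq2 := q.2
    have hqr : q ≠ r := fun hEq => by
      have := congrArg Fin.val hEq; omega
    have hlr : (⟨n - 1, by omega⟩ : Fin n) ≠ r := fun hEq =>
      (show (n - 1 : ℕ) ≠ (r : ℕ) by omega) (congrArg Fin.val hEq)
    rw [rho, dif_neg hq, lam, dif_pos hr, if_neg hqr, ← eps_mul_pi hf r hr, ← mul_assoc]
    have hz : eps f (⟨n - 1, by omega⟩ : Fin n) * eps f r = 0 := by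
      rw [eps, eps, ← _root_.map_mul, AE_mul_AE_ne hlr, map_zero]
    rw [hz, zero_mul]
  · have hq2 := q.2
    have hr2 := r.2
    have hqr : q = r := Fin.ext (by omega)
    rw [rho, dif_neg hq, lam, dif_neg hr, if_pos hqr]
    exact eps_mul_eps _

lemma lam_mul_rho_self (hf : InvertsSigma k S n f) (hn : 3 ≤ n) (p : Fin n) :
    lam hf hn p * rho f hn p = eps f p := by
  by_cases hp : (p : ℕ) < n - 1
  · rw [lam, dif_pos hp, rho, dif_pos hp]
    exact pi_mul_sg hf p hp
  · rw [lam, dif_neg hp, rho, dif_neg hp]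
    exact (eps_mul_eps _).trans (congrArg (eps f) (fin_eq_last hn p hp).symm)

lemma lam_mul_eps (hf : InvertsSigma k S n f) (hn : 3 ≤ n) (p : Fin n) :
    lam hf hn p * eps f ⟨n - 1, by omega⟩ = lam hf hn p := by
  rw [lam]
  by_cases hp : (p : ℕ) < n - 1
  · rw [dif_pos hp]
    exact pi_mul_eps hf p hp
  · rw [dif_neg hp]
    exact eps_mul_eps _

lemma lam_dl_rho (hf : InvertsSigma k S n f) (hn : 3 ≤ n) (p q : Fin n) (s : S)
    (h : q < p ∨ (p = q ∧ s ∈ (algebraMap k S).range)) :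
    lam hf hn p * dl hf hn s * rho f hn q = f (AE s p q h) := by
  by_cases hq : (q : ℕ) < n - 1
  · have hds : dl hf hn s * rho f hn q =
        f (AE s ⟨n - 1, by omega⟩ q (Or.inl (Fin.lt_def.mpr hq))) := by
      rw [rho, dif_pos hq, dl_eq hf hn s q hq, mul_assoc, pi_mul_sg hf q hq, AE_mul_eps]
    by_cases hp : (p : ℕ) < n - 1
    · rw [mul_assoc, hds, lam, dif_pos hp]
      exact pi_mul_AE hf p q hp hq s h
    · rw [mul_assoc, hds, lam, dif_neg hp]
      have hAE : AE (k := k) s p q h =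
          AE s ⟨n - 1, by omega⟩ q (Or.inl (Fin.lt_def.mpr hq)) := by
        refine Subtype.ext ?_
        exact congrArg (fun x : Fin n => Matrix.single x q s) (fin_eq_last hn p hp)
      rw [hAE, eps_mul_AE]
  · have hq2 := q.2
    have hp2 := p.2
    have hps : p = q ∧ s ∈ (algebraMap k S).range := by
      rcases h with h | h
      · exfalso
        have := Fin.lt_def.mp h
        omega
      · exact h
    obtain ⟨hpq, hs⟩ := hps
    have hp1 : (p : ℕ) = n - 1 := by
      have := congrArg Fin.val hpq; omega
    rw [lam, dif_neg (by omega), rho, dif_neg (by omega), eps_mul_dl hf hn s,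
      dl_mul_eps hf hn s, dl_range hf hn s hs]
    congr 1
    refine Subtype.ext ?_
    have hpl : p = (⟨n - 1, by omega⟩ : Fin n) := Fin.ext (by show (p:ℕ) = n - 1; omega)
    have hql : q = (⟨n - 1, by omega⟩ : Fin n) := Fin.ext (by show (q:ℕ) = n - 1; omega)
    calc Matrix.single (⟨n - 1, by omega⟩ : Fin n) (⟨n - 1, by omega⟩ : Fin n) s
        = Matrix.single p (⟨n - 1, by omega⟩ : Fin n) s :=
          congrArg (fun x : Fin n => Matrix.single x (⟨n - 1, by omega⟩ : Fin n) s) hpl.symm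
      _ = Matrix.single p q s := congrArg (fun x : Fin n => Matrix.single p x s) hql.symm

lemma dl_sum (hf : InvertsSigma k S n f) (hn : 3 ≤ n) {ι : Type*} (sfin : Finset ι)
    (g : ι → S) : dl hf hn (∑ i ∈ sfin, g i) = ∑ i ∈ sfin, dl hf hn (g i) :=
  map_sum (AddMonoidHom.mk' (dl hf hn) (dl_add hf hn)) g sfin

lemma sum_AE_one (hn : 3 ≤ n) :
    (∑ p : Fin n, AE (k := k) (S := S) (1 : S) p p (Or.inr ⟨rfl, ⟨1, map_one _⟩⟩)) = 1 := by
  refine Subtype.ext ?_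
  rw [AddSubmonoidClass.coe_finset_sum, OneMemClass.coe_one]
  ext r c
  rw [Matrix.sum_apply]
  by_cases hrc : r = c
  · subst hrc
    rw [Matrix.one_apply_eq, Finset.sum_eq_single r]
    · exact Matrix.single_apply_same r r 1
    · intro l _ hl
      exact Matrix.single_apply_of_ne l l 1 r r (by rintro ⟨rfl, -⟩; exact hl rfl)
    · intro hmem; exact absurd (Finset.mem_univ r) hmem
  · rw [Matrix.one_apply_ne hrc]
    apply Finset.sum_eq_zero
    intro l _
    exact Matrix.single_apply_of_ne l l 1 r c (by rintro ⟨rfl, rfl⟩; exact hrc rfl)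

lemma sum_eps_one (hn : 3 ≤ n) : (∑ p : Fin n, eps f p) = 1 := by
  simp only [eps]
  rw [← map_sum f, sum_AE_one hn, _root_.map_one]

lemma gterm_mul (hf : InvertsSigma k S n f) (hn : 3 ≤ n) (a b : S) (p q r w : Fin n) :
    (lam hf hn p * dl hf hn a * rho f hn q) * (lam hf hn r * dl hf hn b * rho f hn w)
    = if q = r then lam hf hn p * dl hf hn (a * b) * rho f hn w else 0 := by
  by_cases hqr : q = r
  · subst hqr
    rw [if_pos rfl]
    have h1 : rho f hn q * lam hf hn q = eps f ⟨n - 1, by omega⟩ := by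
      rw [rho_mul_lam hf hn q q, if_pos rfl]
    calc (lam hf hn p * dl hf hn a * rho f hn q) * (lam hf hn q * dl hf hn b * rho f hn w)
        = lam hf hn p * dl hf hn a * ((rho f hn q * lam hf hn q) * dl hf hn b)
            * rho f hn w := by simp only [mul_assoc]
      _ = lam hf hn p * dl hf hn a * dl hf hn b * rho f hn w := by
          rw [h1, eps_mul_dl hf hn]
      _ = lam hf hn p * (dl hf hn a * dl hf hn b) * rho f hn w := by
          simp only [mul_assoc]
      _ = lam hf hn p * dl hf hn (a * b) * rho f hn w := by rw [dl_mul hf hn]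
  · rw [if_neg hqr]
    have h1 : rho f hn q * lam hf hn r = 0 := by
      rw [rho_mul_lam hf hn q r, if_neg hqr]
    calc (lam hf hn p * dl hf hn a * rho f hn q) * (lam hf hn r * dl hf hn b * rho f hn w)
        = lam hf hn p * dl hf hn a * ((rho f hn q * lam hf hn r)
            * (dl hf hn b * rho f hn w)) := by simp only [mul_assoc]
      _ = 0 := by rw [h1, zero_mul, mul_zero]

/-- The induced ring homomorphism `Mₙ(S) → T`. -/
noncomputable def gmap (hf : InvertsSigma k S n f) (hn : 3 ≤ n) :
    Matrix (Fin n) (Fin n) S →+* T where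
  toFun m := ∑ p : Fin n, ∑ q : Fin n, lam hf hn p * dl hf hn (m p q) * rho f hn q
  map_zero' := by
    simp [dl_zero hf hn]
  map_add' m m' := by
    simp only [Matrix.add_apply, dl_add hf hn, mul_add, add_mul, Finset.sum_add_distrib]
  map_one' := by
    have hterm : ∀ p q : Fin n,
        lam hf hn p * dl hf hn ((1 : Matrix (Fin n) (Fin n) S) p q) * rho f hn q
        = if p = q then eps f p else 0 := by
      intro p q
      by_cases hpq : p = q
      · subst hpq
        rw [if_pos rfl, Matrix.one_apply_eq, dl_one hf hn, lam_mul_eps hf hn p,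
          lam_mul_rho_self hf hn p]
      · rw [if_neg hpq, Matrix.one_apply_ne hpq, dl_zero hf hn, mul_zero, zero_mul]
    calc ∑ p : Fin n, ∑ q : Fin n,
          lam hf hn p * dl hf hn ((1 : Matrix (Fin n) (Fin n) S) p q) * rho f hn q
        = ∑ p : Fin n, ∑ q : Fin n, if p = q then eps f p else 0 :=
          Finset.sum_congr rfl fun p _ => Finset.sum_congr rfl fun q _ => hterm p q
      _ = ∑ p : Fin n, eps f p := by
          refine Finset.sum_congr rfl fun p _ => ?_
          rw [Finset.sum_ite_eq, if_pos (Finset.mem_univ p)]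
      _ = 1 := sum_eps_one hn
  map_mul' m m' := by
    have expand : (∑ p : Fin n, ∑ q : Fin n, lam hf hn p * dl hf hn (m p q) * rho f hn q) *
        (∑ r : Fin n, ∑ w : Fin n, lam hf hn r * dl hf hn (m' r w) * rho f hn w)
        = ∑ p : Fin n, ∑ r : Fin n, ∑ q : Fin n, ∑ w : Fin n,
            (lam hf hn p * dl hf hn (m p q) * rho f hn q) *
            (lam hf hn r * dl hf hn (m' r w) * rho f hn w) := by
      rw [Finset.sum_mul_sum]
      exact Finset.sum_congr rfl fun p _ => Finset.sum_congr rfl fun r _ =>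
        Finset.sum_mul_sum _ _ _ _
    have step2 : ∀ p : Fin n,
        (∑ r : Fin n, ∑ q : Fin n, ∑ w : Fin n,
          (lam hf hn p * dl hf hn (m p q) * rho f hn q) *
          (lam hf hn r * dl hf hn (m' r w) * rho f hn w))
        = ∑ q : Fin n, ∑ w : Fin n, lam hf hn p * dl hf hn (m p q * m' q w) * rho f hn w := by
      intro p
      rw [Finset.sum_comm]
      refine Finset.sum_congr rfl fun q _ => ?_
      rw [Finset.sum_comm]
      refine Finset.sum_congr rfl fun w _ => ?_
      calc ∑ r : Fin n, (lam hf hn p * dl hf hn (m p q) * rho f hn q) *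
            (lam hf hn r * dl hf hn (m' r w) * rho f hn w)
          = ∑ r : Fin n, if q = r then lam hf hn p * dl hf hn (m p q * m' r w) * rho f hn w
              else 0 :=
            Finset.sum_congr rfl fun r _ => gterm_mul hf hn (m p q) (m' r w) p q r w
        _ = lam hf hn p * dl hf hn (m p q * m' q w) * rho f hn w := by
            rw [Finset.sum_ite_eq, if_pos (Finset.mem_univ q)]
    have step3 : ∀ p w : Fin n, lam hf hn p * dl hf hn ((m * m') p w) * rho f hn w
        = ∑ q : Fin n, lam hf hn p * dl hf hn (m p q * m' q w) * rho f hn w := by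
      intro p w
      rw [Matrix.mul_apply, dl_sum hf hn, Finset.mul_sum, Finset.sum_mul]
    calc ∑ p : Fin n, ∑ w : Fin n, lam hf hn p * dl hf hn ((m * m') p w) * rho f hn w
        = ∑ p : Fin n, ∑ w : Fin n, ∑ q : Fin n,
            lam hf hn p * dl hf hn (m p q * m' q w) * rho f hn w :=
          Finset.sum_congr rfl fun p _ => Finset.sum_congr rfl fun w _ => step3 p w
      _ = ∑ p : Fin n, ∑ q : Fin n, ∑ w : Fin n,
            lam hf hn p * dl hf hn (m p q * m' q w) * rho f hn w :=
          Finset.sum_congr rfl fun p _ => Finset.sum_comm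
      _ = ∑ p : Fin n, ∑ r : Fin n, ∑ q : Fin n, ∑ w : Fin n,
            (lam hf hn p * dl hf hn (m p q) * rho f hn q) *
            (lam hf hn r * dl hf hn (m' r w) * rho f hn w) :=
          (Finset.sum_congr rfl fun p _ => step2 p).symm
      _ = _ := expand.symm

lemma gmap_apply (hf : InvertsSigma k S n f) (hn : 3 ≤ n) (m : Matrix (Fin n) (Fin n) S) :
    gmap hf hn m = ∑ p : Fin n, ∑ q : Fin n,
      lam hf hn p * dl hf hn (m p q) * rho f hn q := rfl

lemma gmap_res (hf : InvertsSigma k S n f) (hn : 3 ≤ n) (a : lowTri k S n) :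
    gmap hf hn a.1 = f a := by
  have hmem : ∀ p q : Fin n, Matrix.single p q (a.1 p q) ∈ lowTri k S n := by
    intro p q
    rcases lt_trichotomy q p with h | h | h
    · exact AE_mem (Or.inl h)
    · subst h
      exact AE_mem (Or.inr ⟨rfl, a.2.2 q⟩)
    · have hz : a.1 p q = 0 := a.2.1 p q h
      have : Matrix.single p q (a.1 p q) = 0 := by rw [hz, Matrix.single_zero]
      rw [this]
      exact zero_mem _
  have hterm : ∀ p q : Fin n, lam hf hn p * dl hf hn (a.1 p q) * rho f hn q
      = f (⟨Matrix.single p q (a.1 p q), hmem p q⟩ : lowTri k S n) := by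
    intro p q
    rcases lt_trichotomy q p with h | h | h
    · exact lam_dl_rho hf hn p q _ (Or.inl h)
    · subst h
      exact lam_dl_rho hf hn q q _ (Or.inr ⟨rfl, a.2.2 q⟩)
    · have hz : a.1 p q = 0 := a.2.1 p q h
      have h2 : (⟨Matrix.single p q (a.1 p q), hmem p q⟩ : lowTri k S n) = 0 :=
        Subtype.ext (by
          show Matrix.single p q (a.1 p q) = (0 : Matrix (Fin n) (Fin n) S)
          rw [hz, Matrix.single_zero])
      rw [h2, map_zero, hz, dl_zero hf hn, mul_zero, zero_mul]
  rw [gmap_apply]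
  calc ∑ p : Fin n, ∑ q : Fin n, lam hf hn p * dl hf hn (a.1 p q) * rho f hn q
      = ∑ p : Fin n, ∑ q : Fin n,
          f (⟨Matrix.single p q (a.1 p q), hmem p q⟩ : lowTri k S n) :=
        Finset.sum_congr rfl fun p _ => Finset.sum_congr rfl fun q _ => hterm p q
    _ = f (∑ p : Fin n, ∑ q : Fin n,
          (⟨Matrix.single p q (a.1 p q), hmem p q⟩ : lowTri k S n)) := by
        rw [map_sum f]
        exact Finset.sum_congr rfl fun p _ => by rw [map_sum f]
    _ = f a := by
        congr 1
        refine Subtype.ext ?_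
        rw [AddSubmonoidClass.coe_finset_sum]
        calc (∑ p : Fin n, ((∑ q : Fin n,
              (⟨Matrix.single p q (a.1 p q), hmem p q⟩ : lowTri k S n)) : lowTri k S n).1)
            = ∑ p : Fin n, ∑ q : Fin n, Matrix.single p q (a.1 p q) :=
              Finset.sum_congr rfl fun p _ => AddSubmonoidClass.coe_finset_sum _ _
          _ = a.1 := (Matrix.matrix_eq_sum_single a.1).symm

lemma hom_val_pi (hf : InvertsSigma k S n f) (hn : 3 ≤ n)
    (g' : Matrix (Fin n) (Fin n) S →+* T) (hg' : ∀ a : lowTri k S n, g' a.1 = f a)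
    (i : Fin n) (hi : (i : ℕ) < n - 1) :
    g' (Matrix.single i (⟨n - 1, by omega⟩ : Fin n) 1) = pi' hf i hi := by
  apply sg_inj hf i hi
  · have he : eps f ⟨n - 1, by omega⟩ =
        g' (Matrix.single (⟨n - 1, by omega⟩ : Fin n) (⟨n - 1, by omega⟩ : Fin n) 1) :=
      (hg' (AE 1 ⟨n - 1, by omega⟩ ⟨n - 1, by omega⟩ (Or.inr ⟨rfl, ⟨1, map_one _⟩⟩))).symm
    rw [he, ← _root_.map_mul]
    congr 1
    rw [Matrix.single_mul_single_same, mul_one]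
  · exact pi_mul_eps hf i hi
  · rw [pi_mul_sg hf i hi]
    have hs : sg f i hi = g' (Matrix.single (⟨n - 1, by omega⟩ : Fin n) i 1) :=
      (hg' (AE 1 ⟨n - 1, by omega⟩ i (Or.inl (Fin.lt_def.mpr hi)))).symm
    rw [hs, ← _root_.map_mul, Matrix.single_mul_single_same, one_mul]
    exact hg' (AE 1 i i (Or.inr ⟨rfl, ⟨1, map_one _⟩⟩))

lemma hom_eq (hf : InvertsSigma k S n f) (hn : 3 ≤ n)
    (g' : Matrix (Fin n) (Fin n) S →+* T) (hg' : ∀ a : lowTri k S n, g' a.1 = f a)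
    (m : Matrix (Fin n) (Fin n) S) :
    g' m = ∑ p : Fin n, ∑ q : Fin n, lam hf hn p * dl hf hn (m p q) * rho f hn q := by
  have h0 : ((⟨0, by omega⟩ : Fin n) : ℕ) < n - 1 := by show (0 : ℕ) < n - 1; omega
  have hm : m = ∑ p : Fin n, ∑ q : Fin n,
      Matrix.single p (⟨n - 1, by omega⟩ : Fin n) 1 *
        Matrix.single (⟨n - 1, by omega⟩ : Fin n) (⟨0, by omega⟩ : Fin n) (m p q) *
        Matrix.single (⟨0, by omega⟩ : Fin n) (⟨n - 1, by omega⟩ : Fin n) 1 *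
        Matrix.single (⟨n - 1, by omega⟩ : Fin n) q 1 := by
    have hprod : ∀ p q : Fin n,
        Matrix.single p (⟨n - 1, by omega⟩ : Fin n) 1 *
          Matrix.single (⟨n - 1, by omega⟩ : Fin n) (⟨0, by omega⟩ : Fin n) (m p q) *
          Matrix.single (⟨0, by omega⟩ : Fin n) (⟨n - 1, by omega⟩ : Fin n) 1 *
          Matrix.single (⟨n - 1, by omega⟩ : Fin n) q 1 = Matrix.single p q (m p q) := by
      intro p q
      rw [Matrix.single_mul_single_same, Matrix.single_mul_single_same, Matrix.single_mul_single_same,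
        one_mul, mul_one, mul_one]
    calc m = ∑ p : Fin n, ∑ q : Fin n, Matrix.single p q (m p q) :=
          Matrix.matrix_eq_sum_single m
      _ = _ := (Finset.sum_congr rfl fun p _ =>
          Finset.sum_congr rfl fun q _ => hprod p q).symm
  conv_lhs => rw [hm]
  rw [map_sum g']
  refine Finset.sum_congr rfl fun p _ => ?_
  rw [map_sum g']
  refine Finset.sum_congr rfl fun q _ => ?_
  rw [_root_.map_mul, _root_.map_mul, _root_.map_mul]
  have hlam : g' (Matrix.single p (⟨n - 1, by omega⟩ : Fin n) 1) = lam hf hn p := by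
    by_cases hp : (p : ℕ) < n - 1
    · rw [lam, dif_pos hp]
      exact hom_val_pi hf hn g' hg' p hp
    · rw [lam, dif_neg hp]
      have hpl : p = (⟨n - 1, by omega⟩ : Fin n) := fin_eq_last hn p hp
      rw [hpl]
      exact hg' (AE 1 ⟨n - 1, by omega⟩ ⟨n - 1, by omega⟩ (Or.inr ⟨rfl, ⟨1, map_one _⟩⟩))
  have hmid : g' (Matrix.single (⟨n - 1, by omega⟩ : Fin n) (⟨0, by omega⟩ : Fin n) (m p q))
      = f (AE (m p q) ⟨n - 1, by omega⟩ ⟨0, by omega⟩ (Or.inl (Fin.lt_def.mpr h0))) :=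
    hg' (AE (m p q) ⟨n - 1, by omega⟩ ⟨0, by omega⟩ (Or.inl (Fin.lt_def.mpr h0)))
  have hpi0 : g' (Matrix.single (⟨0, by omega⟩ : Fin n) (⟨n - 1, by omega⟩ : Fin n) 1)
      = pi' hf ⟨0, by omega⟩ h0 := hom_val_pi hf hn g' hg' ⟨0, by omega⟩ h0
  have hrho : g' (Matrix.single (⟨n - 1, by omega⟩ : Fin n) q 1) = rho f hn q := by
    by_cases hq : (q : ℕ) < n - 1
    · rw [rho, dif_pos hq]
      exact hg' (AE 1 ⟨n - 1, by omega⟩ q (Or.inl (Fin.lt_def.mpr hq)))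
    · rw [rho, dif_neg hq]
      have hql : q = (⟨n - 1, by omega⟩ : Fin n) := fin_eq_last hn q hq
      rw [hql]
      exact hg' (AE 1 ⟨n - 1, by omega⟩ ⟨n - 1, by omega⟩ (Or.inr ⟨rfl, ⟨1, map_one _⟩⟩))
  rw [hlam, hmid, hpi0, hrho, dl]
  simp only [mul_assoc]

end Part2

end Stmt12

/-- Let `k` be a commutative ring, `S` a `k`-algebra flat over `k`,
`n ≥ 3`, `A ⊆ Mₙ(S)` the subring of lower triangular matrices with diagonal entries in
the image of `k → S`, `P_i` the column modules and `s_i : P_{n-1} → P_i` (`i < n-1`)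
the inclusions.  Then the inclusion `A ↪ Mₙ(S)` is the universal `{s_i}`-inverting ring
homomorphism: it is `{s_i}`-inverting, and for every ring `T` and ring homomorphism
`f : A → T` inverting the `s_i`, there is a unique ring homomorphism `g : Mₙ(S) → T`
whose restriction to `A` is `f`. -/
theorem statement12 (k S : Type u) [CommRing k] [Ring S] [Algebra k S] [Module.Flat k S]
    (n : ℕ) (hn : 3 ≤ n) :
    InvertsSigma k S n ((lowTri k S n).subtype)
    ∧ ∀ (T : Type u) [Ring T] (f : (lowTri k S n) →+* T), InvertsSigma k S n f →
        ∃! g : Matrix (Fin n) (Fin n) S →+* T, ∀ a : lowTri k S n, g a.1 = f a := by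
  constructor
  · exact Stmt12.subtype_inverts hn
  · intro T _ f hf
    refine ⟨Stmt12.gmap hf hn, fun a => Stmt12.gmap_res hf hn a, fun g' hg' => ?_⟩
    refine RingHom.ext fun m => ?_
    rw [Stmt12.hom_eq hf hn g' hg' m,
      Stmt12.hom_eq hf hn (Stmt12.gmap hf hn) (fun a => Stmt12.gmap_res hf hn a) m]
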